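/- Let K be a positive integer, α a real skew-symmetric K×K matrix, and T > 0. Let u: [−T,T] × ℝ → ℝ^K be twice continuously differentiable and 2π-periodic in the second variable θ, and let f: [−T,T] × ℝ → ℝ^K be continuous and 2π-periodic in θ. Assume the pointwise orthogonality ⟨∂_t u, ∂_t² u + ∂_θ² u + 2α·∂_θ u + α²·u − f⟩ = 0 at every point. Define e(t) := ∫₀^{2π} (‖∂_t u(t,θ)‖² − ‖∂_θ u(t,θ) + α·u(t,θ)‖²) dθ. Then for all t ∈ [−T, T]: |e(t) − e(0)| ≤ 2·‖Du‖_{C⁰}·∫_{−|t|}^{|t|} ∫₀^{2π} ‖f(s,θ)‖ dθ ds, where ‖Du‖_{C⁰} := sup over [−T,T]×ℝ of (‖∂_t u‖² + ‖∂_θ u + α·u‖²)^{1/2}. -/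

import Mathlib

open Real MeasureTheory Set
open scoped Matrix RealInnerProductSpace

/-- The action of a `K × K` real matrix on `ℝ^K` (with the Euclidean norm). -/
noncomputable def matAct {K : ℕ} (α : Matrix (Fin K) (Fin K) ℝ)
    (x : EuclideanSpace ℝ (Fin K)) : EuclideanSpace ℝ (Fin K) :=
  Matrix.toEuclideanLin α x

noncomputable def matCLM {K : ℕ} (α : Matrix (Fin K) (Fin K) ℝ) :
    EuclideanSpace ℝ (Fin K) →L[ℝ] EuclideanSpace ℝ (Fin K) :=
  LinearMap.toContinuousLinearMap (Matrix.toEuclideanLin α)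

lemma matAct_eq {K : ℕ} (α : Matrix (Fin K) (Fin K) ℝ) (x : EuclideanSpace ℝ (Fin K)) :
    matAct α x = matCLM α x := rfl

lemma inner_matCLM_skew {K : ℕ} {α : Matrix (Fin K) (Fin K) ℝ} (hα : αᵀ = -α)
    (x y : EuclideanSpace ℝ (Fin K)) : ⟪x, matCLM α y⟫ = -⟪matCLM α x, y⟫ := by
  have key : ∀ (v w : Fin K → ℝ), v ⬝ᵥ (α *ᵥ w) = -((α *ᵥ v) ⬝ᵥ w) := by
    intro v w
    rw [Matrix.dotProduct_mulVec, ← Matrix.vecMul_transpose, hα, Matrix.vecMul_neg,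
      neg_dotProduct, neg_neg]
  have hx : ∀ z : EuclideanSpace ℝ (Fin K),
      matCLM α z = (WithLp.equiv 2 _).symm (α.mulVec ((WithLp.equiv 2 _) z)) := fun z =>
    Matrix.toEuclideanLin_apply α z
  simp only [hx]
  simpa [PiLp.inner_apply, RCLike.inner_apply, dotProduct, mul_comm] using
    key (WithLp.equiv 2 _ x) (WithLp.equiv 2 _ y)

/-- First partial derivative of `u` in the `t` direction, as a function of `p = (t, θ)`. -/
noncomputable def P1 {K : ℕ} (u : ℝ → ℝ → EuclideanSpace ℝ (Fin K)) (p : ℝ × ℝ) :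
    EuclideanSpace ℝ (Fin K) :=
  fderiv ℝ (Function.uncurry u) p (1, 0)

/-- First partial derivative of `u` in the `θ` direction. -/
noncomputable def P2 {K : ℕ} (u : ℝ → ℝ → EuclideanSpace ℝ (Fin K)) (p : ℝ × ℝ) :
    EuclideanSpace ℝ (Fin K) :=
  fderiv ℝ (Function.uncurry u) p (0, 1)

/-- Second derivative of `u` in directions `v, w`. -/
noncomputable def Qd {K : ℕ} (u : ℝ → ℝ → EuclideanSpace ℝ (Fin K)) (p : ℝ × ℝ)
    (v w : ℝ × ℝ) : EuclideanSpace ℝ (Fin K) :=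
  fderiv ℝ (fderiv ℝ (Function.uncurry u)) p v w

/-- The "angular" combination `∂_θ u + α u`. -/
noncomputable def Bm {K : ℕ} (α : Matrix (Fin K) (Fin K) ℝ)
    (u : ℝ → ℝ → EuclideanSpace ℝ (Fin K)) (p : ℝ × ℝ) : EuclideanSpace ℝ (Fin K) :=
  P2 u p + matCLM α (Function.uncurry u p)

/-- `t`-derivative of `Bm`. -/
noncomputable def DBm {K : ℕ} (α : Matrix (Fin K) (Fin K) ℝ)
    (u : ℝ → ℝ → EuclideanSpace ℝ (Fin K)) (p : ℝ × ℝ) : EuclideanSpace ℝ (Fin K) :=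
  Qd u p (1, 0) (0, 1) + matCLM α (P1 u p)

/-- `t`-derivative of the energy density difference. -/
noncomputable def gT {K : ℕ} (α : Matrix (Fin K) (Fin K) ℝ)
    (u : ℝ → ℝ → EuclideanSpace ℝ (Fin K)) (p : ℝ × ℝ) : ℝ :=
  (⟪P1 u p, Qd u p (1, 0) (1, 0)⟫ + ⟪Qd u p (1, 0) (1, 0), P1 u p⟫)
    - (⟪Bm α u p, DBm α u p⟫ + ⟪DBm α u p, Bm α u p⟫)

/-- `θ`-derivative of `⟪Bm, P1⟫`. -/
noncomputable def hTh {K : ℕ} (α : Matrix (Fin K) (Fin K) ℝ)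
    (u : ℝ → ℝ → EuclideanSpace ℝ (Fin K)) (p : ℝ × ℝ) : ℝ :=
  ⟪Bm α u p, Qd u p (0, 1) (1, 0)⟫
    + ⟪Qd u p (0, 1) (0, 1) + matCLM α (P2 u p), P1 u p⟫

section Derivs

variable {K : ℕ} {u : ℝ → ℝ → EuclideanSpace ℝ (Fin K)}
  (α : Matrix (Fin K) (Fin K) ℝ)
  (hu : ContDiff ℝ 2 (Function.uncurry u))

lemma curve_fst (θ t : ℝ) : HasDerivAt (fun s : ℝ => (s, θ)) ((1:ℝ), (0:ℝ)) t := by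
  simpa using (hasDerivAt_id t).prodMk (hasDerivAt_const t θ)

lemma curve_snd (t θ : ℝ) : HasDerivAt (fun y : ℝ => (t, y)) ((0:ℝ), (1:ℝ)) θ := by
  simpa using (hasDerivAt_const θ t).prodMk (hasDerivAt_id θ)

include hu

lemma hasDerivAt_P1 (t θ : ℝ) : HasDerivAt (fun s => u s θ) (P1 u (t, θ)) t := by
  have hd : HasFDerivAt (Function.uncurry u) (fderiv ℝ (Function.uncurry u) (t, θ)) (t, θ) :=
    ((hu.differentiable (by norm_num)) (t, θ)).hasFDerivAt
  exact hd.comp_hasDerivAt t (curve_fst θ t)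

lemma hasDerivAt_P2 (t θ : ℝ) : HasDerivAt (u t) (P2 u (t, θ)) θ := by
  have hd : HasFDerivAt (Function.uncurry u) (fderiv ℝ (Function.uncurry u) (t, θ)) (t, θ) :=
    ((hu.differentiable (by norm_num)) (t, θ)).hasFDerivAt
  exact hd.comp_hasDerivAt θ (curve_snd t θ)

lemma contDiff_fderiv : ContDiff ℝ 1 (fderiv ℝ (Function.uncurry u)) :=
  hu.fderiv_right (by norm_num)

lemma hasDerivAt_fderiv_fst (t θ : ℝ) (v : ℝ × ℝ) :
    HasDerivAt (fun s => fderiv ℝ (Function.uncurry u) (s, θ) v) (Qd u (t, θ) (1, 0) v) t := by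
  have hd : HasFDerivAt (fderiv ℝ (Function.uncurry u))
      (fderiv ℝ (fderiv ℝ (Function.uncurry u)) (t, θ)) (t, θ) :=
    (((contDiff_fderiv hu).differentiable (by norm_num)) (t, θ)).hasFDerivAt
  have h1 : HasDerivAt (fun s => fderiv ℝ (Function.uncurry u) (s, θ))
      (fderiv ℝ (fderiv ℝ (Function.uncurry u)) (t, θ) (1, 0)) t :=
    hd.comp_hasDerivAt t (curve_fst θ t)
  exact (ContinuousLinearMap.apply ℝ (EuclideanSpace ℝ (Fin K)) v).hasFDerivAt.comp_hasDerivAt t h1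

lemma hasDerivAt_fderiv_snd (t θ : ℝ) (v : ℝ × ℝ) :
    HasDerivAt (fun y => fderiv ℝ (Function.uncurry u) (t, y) v) (Qd u (t, θ) (0, 1) v) θ := by
  have hd : HasFDerivAt (fderiv ℝ (Function.uncurry u))
      (fderiv ℝ (fderiv ℝ (Function.uncurry u)) (t, θ)) (t, θ) :=
    (((contDiff_fderiv hu).differentiable (by norm_num)) (t, θ)).hasFDerivAt
  have h1 : HasDerivAt (fun y => fderiv ℝ (Function.uncurry u) (t, y))
      (fderiv ℝ (fderiv ℝ (Function.uncurry u)) (t, θ) (0, 1)) θ :=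
    hd.comp_hasDerivAt θ (curve_snd t θ)
  exact (ContinuousLinearMap.apply ℝ (EuclideanSpace ℝ (Fin K)) v).hasFDerivAt.comp_hasDerivAt θ h1

lemma Qd_symm (p : ℝ × ℝ) (v w : ℝ × ℝ) : Qd u p v w = Qd u p w v :=
  (hu.contDiffAt.isSymmSndFDerivAt (by simp)) v w

lemma continuous_P1 : Continuous (P1 u) :=
  (hu.continuous_fderiv (by norm_num)).clm_apply continuous_const

lemma continuous_P2 : Continuous (P2 u) :=
  (hu.continuous_fderiv (by norm_num)).clm_apply continuous_const

lemma continuous_Qd (v w : ℝ × ℝ) : Continuous (fun p => Qd u p v w) :=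
  (((contDiff_fderiv hu).continuous_fderiv one_ne_zero).clm_apply continuous_const).clm_apply
    continuous_const

lemma continuous_Bm : Continuous (Bm α u) :=
  (continuous_P2 hu).add ((matCLM α).continuous.comp hu.continuous)

lemma continuous_DBm : Continuous (DBm α u) :=
  (continuous_Qd hu (1,0) (0,1)).add ((matCLM α).continuous.comp (continuous_P1 hu))

lemma continuous_gT : Continuous (gT α u) :=
  (((continuous_P1 hu).inner (continuous_Qd hu (1,0) (1,0))).add
    ((continuous_Qd hu (1,0) (1,0)).inner (continuous_P1 hu))).sub
    (((continuous_Bm α hu).inner (continuous_DBm α hu)).add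
      ((continuous_DBm α hu).inner (continuous_Bm α hu)))

lemma hasDerivAt_Bm_t (t θ : ℝ) :
    HasDerivAt (fun s => Bm α u (s, θ)) (DBm α u (t, θ)) t :=
  (hasDerivAt_fderiv_fst hu t θ (0,1)).add
    ((matCLM α).hasFDerivAt.comp_hasDerivAt t (hasDerivAt_P1 hu t θ))

lemma hasDerivAt_Bm_θ (t θ : ℝ) :
    HasDerivAt (fun y => Bm α u (t, y))
      (Qd u (t, θ) (0, 1) (0, 1) + matCLM α (P2 u (t, θ))) θ :=
  (hasDerivAt_fderiv_snd hu t θ (0,1)).add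
    ((matCLM α).hasFDerivAt.comp_hasDerivAt θ (hasDerivAt_P2 hu t θ))

lemma hasDerivAt_g_t (t θ : ℝ) :
    HasDerivAt (fun s => ‖P1 u (s, θ)‖ ^ 2 - ‖Bm α u (s, θ)‖ ^ 2) (gT α u (t, θ)) t := by
  have hA : HasDerivAt (fun s => P1 u (s, θ)) (Qd u (t, θ) (1, 0) (1, 0)) t :=
    hasDerivAt_fderiv_fst hu t θ (1, 0)
  have hB := hasDerivAt_Bm_t α hu t θ
  have heq : (fun s => ‖P1 u (s, θ)‖ ^ 2 - ‖Bm α u (s, θ)‖ ^ 2)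
      = fun s => (⟪P1 u (s, θ), P1 u (s, θ)⟫ - ⟪Bm α u (s, θ), Bm α u (s, θ)⟫ : ℝ) := by
    funext s; rw [real_inner_self_eq_norm_sq, real_inner_self_eq_norm_sq]
  rw [heq]
  exact (hA.inner ℝ hA).sub (hB.inner ℝ hB)

lemma hasDerivAt_h_θ (t θ : ℝ) :
    HasDerivAt (fun y => (⟪Bm α u (t, y), P1 u (t, y)⟫ : ℝ)) (hTh α u (t, θ)) θ := by
  have hA : HasDerivAt (fun y => P1 u (t, y)) (Qd u (t, θ) (0, 1) (1, 0)) θ :=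
    hasDerivAt_fderiv_snd hu t θ (1, 0)
  exact (hasDerivAt_Bm_θ α hu t θ).inner ℝ hA

lemma P2_periodic (huper : ∀ t : ℝ, Function.Periodic (u t) (2 * Real.pi)) (t θ : ℝ) :
    P2 u (t, θ + 2 * Real.pi) = P2 u (t, θ) := by
  have h1 : HasDerivAt (fun y => u t (y + 2 * Real.pi))
      ((1:ℝ) • P2 u (t, θ + 2 * Real.pi)) θ :=
    (hasDerivAt_P2 hu t (θ + 2 * Real.pi)).scomp θ ((hasDerivAt_id θ).add_const _)
  have h2 : (fun y => u t (y + 2 * Real.pi)) = u t := funext fun y => huper t y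
  rw [h2] at h1
  simpa using h1.unique (hasDerivAt_P2 hu t θ)

lemma P1_periodic (huper : ∀ t : ℝ, Function.Periodic (u t) (2 * Real.pi)) (t θ : ℝ) :
    P1 u (t, θ + 2 * Real.pi) = P1 u (t, θ) := by
  have h2 : (fun s => u s (θ + 2 * Real.pi)) = fun s => u s θ :=
    funext fun s => huper s θ
  have h1 := hasDerivAt_P1 hu t (θ + 2 * Real.pi)
  rw [h2] at h1
  exact h1.unique (hasDerivAt_P1 hu t θ)

lemma Bm_periodic (huper : ∀ t : ℝ, Function.Periodic (u t) (2 * Real.pi)) (t θ : ℝ) :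
    Bm α u (t, θ + 2 * Real.pi) = Bm α u (t, θ) := by
  unfold Bm
  rw [P2_periodic hu huper t θ]
  congr 2
  exact huper t θ

end Derivs

/-- The inner-product algebra at the heart of the computation. -/
lemma key_algebra {K : ℕ} {α : Matrix (Fin K) (Fin K) ℝ} (hα : αᵀ = -α)
    (A P2v Uv Q11 Qm Q0101 F : EuclideanSpace ℝ (Fin K))
    (horth : ⟪A, Q11 + (Q0101 + (2:ℝ) • matCLM α P2v + matCLM α (matCLM α Uv)) - F⟫ = 0) :
    (⟪A, Q11⟫ + ⟪Q11, A⟫)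
      - (⟪P2v + matCLM α Uv, Qm + matCLM α A⟫ + ⟪Qm + matCLM α A, P2v + matCLM α Uv⟫)
    = 2 * ⟪A, F⟫
      - 2 * (⟪P2v + matCLM α Uv, Qm⟫ + ⟪Q0101 + matCLM α P2v, A⟫) := by
  have s1 : ⟪P2v, matCLM α A⟫ = -⟪matCLM α P2v, A⟫ := inner_matCLM_skew hα _ _
  have s2 : ⟪matCLM α Uv, matCLM α A⟫ = -⟪matCLM α (matCLM α Uv), A⟫ := inner_matCLM_skew hα _ _
  simp only [inner_add_left, inner_add_right, inner_sub_right, real_inner_smul_right] at horth ⊢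
  linarith [s1, s2, real_inner_comm A Q11, real_inner_comm A F,
    real_inner_comm P2v Qm, real_inner_comm (matCLM α Uv) Qm,
    real_inner_comm A Q0101, real_inner_comm A (matCLM α P2v),
    real_inner_comm A (matCLM α (matCLM α Uv)),
    real_inner_comm (matCLM α A) P2v, real_inner_comm (matCLM α A) (matCLM α Uv)]
section Main

variable {K : ℕ} {u f : ℝ → ℝ → EuclideanSpace ℝ (Fin K)} {α : Matrix (Fin K) (Fin K) ℝ}

lemma continuous_hTh (α : Matrix (Fin K) (Fin K) ℝ) (hu : ContDiff ℝ 2 (Function.uncurry u)) :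
    Continuous (hTh α u) :=
  ((continuous_Bm α hu).inner (continuous_Qd hu (0,1) (1,0))).add
    (((continuous_Qd hu (0,1) (0,1)).add ((matCLM α).continuous.comp (continuous_P2 hu))).inner
      (continuous_P1 hu))

end Main

/-- Lemma 4.13: the difference `e(t)` of radial and angular energy densities is
almost constant along the cylinder. -/
theorem radial_angular_energy_difference (K : ℕ) (hK : 0 < K)
    (α : Matrix (Fin K) (Fin K) ℝ) (hα : αᵀ = -α) (T : ℝ) (hT : 0 < T)
    (u f : ℝ → ℝ → EuclideanSpace ℝ (Fin K))
    (hu : ContDiff ℝ 2 (Function.uncurry u))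
    (hf : Continuous (Function.uncurry f))
    (huper : ∀ t : ℝ, Function.Periodic (u t) (2 * Real.pi))
    (hfper : ∀ t : ℝ, Function.Periodic (f t) (2 * Real.pi))
    (horth : ∀ t ∈ Icc (-T) T, ∀ θ : ℝ,
      ⟪deriv (fun s => u s θ) t,
        deriv (deriv fun s => u s θ) t
          + (deriv (deriv (u t)) θ + (2 : ℝ) • matAct α (deriv (u t) θ)
              + matAct α (matAct α (u t θ)))
          - f t θ⟫ = 0)
    (M : ℝ)
    (hM : ∀ t ∈ Icc (-T) T, ∀ θ : ℝ,
      Real.sqrt (‖deriv (fun s => u s θ) t‖ ^ 2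
        + ‖deriv (u t) θ + matAct α (u t θ)‖ ^ 2) ≤ M) :
    ∀ t ∈ Icc (-T) T,
      |(∫ θ in (0:ℝ)..(2 * Real.pi),
          (‖deriv (fun s => u s θ) t‖ ^ 2 - ‖deriv (u t) θ + matAct α (u t θ)‖ ^ 2))
        - ∫ θ in (0:ℝ)..(2 * Real.pi),
          (‖deriv (fun s => u s θ) 0‖ ^ 2
            - ‖deriv (u 0) θ + matAct α (u 0 θ)‖ ^ 2)|
      ≤ 2 * M * ∫ s in (-|t|)..|t|, ∫ θ in (0:ℝ)..(2 * Real.pi), ‖f s θ‖ := by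
  intro t ht
  have h2pi : (0:ℝ) ≤ 2 * Real.pi := by positivity
  have h0T : (0:ℝ) ∈ Icc (-T) T := ⟨by linarith, le_of_lt hT⟩
  -- rewrite the goal integrals in terms of `P1` and `Bm`
  have hrw : ∀ s : ℝ, (∫ θ in (0:ℝ)..(2 * Real.pi),
      (‖deriv (fun s' => u s' θ) s‖ ^ 2 - ‖deriv (u s) θ + matAct α (u s θ)‖ ^ 2))
      = ∫ θ in (0:ℝ)..(2 * Real.pi), (‖P1 u (s, θ)‖ ^ 2 - ‖Bm α u (s, θ)‖ ^ 2) := by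
    intro s
    refine intervalIntegral.integral_congr fun θ _ => ?_
    rw [(hasDerivAt_P1 hu s θ).deriv, (hasDerivAt_P2 hu s θ).deriv, matAct_eq]
    rfl
  rw [hrw t, hrw 0]
  -- continuity facts
  have hgc : Continuous fun p : ℝ × ℝ => ‖P1 u p‖ ^ 2 - ‖Bm α u p‖ ^ 2 :=
    ((continuous_P1 hu).norm.pow 2).sub ((continuous_Bm α hu).norm.pow 2)
  have hgTc : Continuous (gT α u) := continuous_gT α hu
  have hThc : Continuous (hTh α u) := continuous_hTh α hu
  have hAfc : Continuous fun p : ℝ × ℝ => (⟪P1 u p, f p.1 p.2⟫ : ℝ) :=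
    (continuous_P1 hu).inner hf
  -- derivative of the energy integral at an arbitrary point
  have he : ∀ t₀ : ℝ, HasDerivAt
      (fun s => ∫ θ in (0:ℝ)..(2 * Real.pi), (‖P1 u (s, θ)‖ ^ 2 - ‖Bm α u (s, θ)‖ ^ 2))
      (∫ θ in (0:ℝ)..(2 * Real.pi), gT α u (t₀, θ)) t₀ := by
    intro t₀
    obtain ⟨C, hC⟩ := ((isCompact_Icc (a := t₀ - 1) (b := t₀ + 1)).prod
      (isCompact_Icc (a := (0:ℝ)) (b := 2 * Real.pi))).exists_bound_of_continuousOn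
      hgTc.continuousOn
    refine (intervalIntegral.hasDerivAt_integral_of_dominated_loc_of_deriv_le
      (F := fun s θ => ‖P1 u (s, θ)‖ ^ 2 - ‖Bm α u (s, θ)‖ ^ 2)
      (F' := fun s θ => gT α u (s, θ)) (bound := fun _ => C) (Metric.ball_mem_nhds t₀ one_pos)
      (Filter.Eventually.of_forall fun x =>
        ((hgc.comp (Continuous.prodMk_right x)).aestronglyMeasurable))
      ((hgc.comp (Continuous.prodMk_right t₀)).intervalIntegrable _ _)
      ((hgTc.comp (Continuous.prodMk_right t₀)).aestronglyMeasurable)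
      (Filter.Eventually.of_forall fun θ hθ x hx => ?_)
      intervalIntegrable_const
      (Filter.Eventually.of_forall fun θ hθ x hx => hasDerivAt_g_t α hu x θ)).2
    have hx' := Metric.mem_ball.mp hx
    rw [Real.dist_eq] at hx'
    rw [Set.uIoc_of_le h2pi] at hθ
    show ‖gT α u (x, θ)‖ ≤ C
    exact hC (x, θ) ⟨⟨by linarith [(abs_le.mp hx'.le).1], by linarith [(abs_le.mp hx'.le).2]⟩,
      Ioc_subset_Icc_self hθ⟩
  -- the boundary integral vanishes by periodicity
  have hint_hTh : ∀ t₀ : ℝ, (∫ θ in (0:ℝ)..(2 * Real.pi), hTh α u (t₀, θ)) = 0 := by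
    intro t₀
    have hftc := intervalIntegral.integral_eq_sub_of_hasDerivAt (a := (0:ℝ)) (b := 2 * Real.pi)
      (f := fun y => (⟪Bm α u (t₀, y), P1 u (t₀, y)⟫ : ℝ))
      (f' := fun y => hTh α u (t₀, y))
      (fun y _ => hasDerivAt_h_θ α hu t₀ y)
      ((hThc.comp (Continuous.prodMk_right t₀)).intervalIntegrable _ _)
    have hb : Bm α u (t₀, 2 * Real.pi) = Bm α u (t₀, 0) := by
      simpa using Bm_periodic α hu huper t₀ 0
    have hp : P1 u (t₀, 2 * Real.pi) = P1 u (t₀, 0) := by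
      simpa using P1_periodic hu huper t₀ 0
    rw [hftc]
    simp only [hb, hp, sub_self]
  -- pointwise key identity on the strip
  have hkey : ∀ s ∈ Icc (-T) T, ∀ θ : ℝ,
      gT α u (s, θ) = 2 * ⟪P1 u (s, θ), f s θ⟫ - 2 * hTh α u (s, θ) := by
    intro s hs θ
    have ho := horth s hs θ
    have e1 : deriv (fun s' => u s' θ) = fun s' => P1 u (s', θ) :=
      funext fun x => (hasDerivAt_P1 hu x θ).deriv
    have e3 : deriv (u s) = fun y => P2 u (s, y) :=
      funext fun y => (hasDerivAt_P2 hu s y).deriv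
    simp only [e1, e3, matAct_eq] at ho
    have e2 : deriv (fun s' => P1 u (s', θ)) s = Qd u (s, θ) (1, 0) (1, 0) :=
      (hasDerivAt_fderiv_fst hu s θ (1, 0)).deriv
    have e4 : deriv (fun y => P2 u (s, y)) θ = Qd u (s, θ) (0, 1) (0, 1) :=
      (hasDerivAt_fderiv_snd hu s θ (0, 1)).deriv
    rw [e2, e4] at ho
    simp only [gT, Bm, DBm, hTh]
    rw [Qd_symm hu (s, θ) (1, 0) (0, 1)]
    exact key_algebra hα (P1 u (s, θ)) (P2 u (s, θ)) (u s θ) (Qd u (s, θ) (1, 0) (1, 0))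
      (Qd u (s, θ) (0, 1) (1, 0)) (Qd u (s, θ) (0, 1) (0, 1)) (f s θ) ho
  -- derivative equals `2 * φ` on the strip
  have he2 : ∀ s ∈ Icc (-T) T, HasDerivAt
      (fun s' => ∫ θ in (0:ℝ)..(2 * Real.pi), (‖P1 u (s', θ)‖ ^ 2 - ‖Bm α u (s', θ)‖ ^ 2))
      (2 * ∫ θ in (0:ℝ)..(2 * Real.pi), (⟪P1 u (s, θ), f s θ⟫ : ℝ)) s := by
    intro s hs
    have h1 := he s
    have hval : (∫ θ in (0:ℝ)..(2 * Real.pi), gT α u (s, θ))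
        = 2 * ∫ θ in (0:ℝ)..(2 * Real.pi), (⟪P1 u (s, θ), f s θ⟫ : ℝ) := by
      rw [intervalIntegral.integral_congr
        (g := fun θ => 2 * (⟪P1 u (s, θ), f s θ⟫ : ℝ) - 2 * hTh α u (s, θ))
        (fun θ _ => hkey s hs θ)]
      have i1 : IntervalIntegrable (fun θ => 2 * (⟪P1 u (s, θ), f s θ⟫ : ℝ)) volume 0
          (2 * Real.pi) :=
        (continuous_const.mul (hAfc.comp (Continuous.prodMk_right s))).intervalIntegrable _ _
      have i2 : IntervalIntegrable (fun θ => 2 * hTh α u (s, θ)) volume 0 (2 * Real.pi) :=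
        (continuous_const.mul (hThc.comp (Continuous.prodMk_right s))).intervalIntegrable _ _
      rw [intervalIntegral.integral_sub i1 i2,
        intervalIntegral.integral_const_mul, intervalIntegral.integral_const_mul, hint_hTh s]
      ring
    rwa [hval] at h1
  -- FTC along `[0, t]`
  have hsub : uIcc (0:ℝ) t ⊆ Icc (-T) T := by
    intro x hx
    rw [Set.uIcc_eq_union] at hx
    rcases hx with hx | hx
    · exact ⟨by linarith [hx.1], le_trans hx.2 ht.2⟩
    · exact ⟨le_trans ht.1 hx.1, by linarith [hx.2, hT]⟩
  have hφc : Continuous fun s => ∫ θ in (0:ℝ)..(2 * Real.pi), (⟪P1 u (s, θ), f s θ⟫ : ℝ) :=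
    intervalIntegral.continuous_parametric_intervalIntegral_of_continuous'
      (f := fun s θ => (⟪P1 u (s, θ), f s θ⟫ : ℝ)) hAfc 0 (2 * Real.pi)
  have hFTC2 := intervalIntegral.integral_eq_sub_of_hasDerivAt (a := (0:ℝ)) (b := t)
    (f' := fun s => 2 * ∫ θ in (0:ℝ)..(2 * Real.pi), (⟪P1 u (s, θ), f s θ⟫ : ℝ))
    (fun x hx => he2 x (hsub hx))
    ((continuous_const.mul hφc).intervalIntegrable _ _)
  rw [← hFTC2]
  -- bounds
  have hM0 : 0 ≤ M := le_trans (Real.sqrt_nonneg _) (hM 0 h0T 0)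
  have hAle : ∀ s ∈ Icc (-T) T, ∀ θ : ℝ, ‖P1 u (s, θ)‖ ≤ M := by
    intro s hs θ
    have h := hM s hs θ
    rw [(hasDerivAt_P1 hu s θ).deriv, (hasDerivAt_P2 hu s θ).deriv, matAct_eq] at h
    calc ‖P1 u (s, θ)‖ = Real.sqrt (‖P1 u (s, θ)‖ ^ 2) := (Real.sqrt_sq (norm_nonneg _)).symm
      _ ≤ Real.sqrt (‖P1 u (s, θ)‖ ^ 2 + ‖P2 u (s, θ) + matCLM α (u s θ)‖ ^ 2) :=
          Real.sqrt_le_sqrt (le_add_of_nonneg_right (sq_nonneg _))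
      _ ≤ M := h
  have hHc : Continuous fun s => ∫ θ in (0:ℝ)..(2 * Real.pi), ‖f s θ‖ :=
    intervalIntegral.continuous_parametric_intervalIntegral_of_continuous'
      (f := fun s θ => ‖f s θ‖) hf.norm 0 (2 * Real.pi)
  have hHnn : ∀ s : ℝ, 0 ≤ ∫ θ in (0:ℝ)..(2 * Real.pi), ‖f s θ‖ := fun s =>
    intervalIntegral.integral_nonneg h2pi fun θ _ => norm_nonneg _
  have hφle : ∀ s ∈ Icc (-T) T,
      |2 * ∫ θ in (0:ℝ)..(2 * Real.pi), (⟪P1 u (s, θ), f s θ⟫ : ℝ)|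
        ≤ 2 * M * ∫ θ in (0:ℝ)..(2 * Real.pi), ‖f s θ‖ := by
    intro s hs
    have h1 : |∫ θ in (0:ℝ)..(2 * Real.pi), (⟪P1 u (s, θ), f s θ⟫ : ℝ)|
        ≤ ∫ θ in (0:ℝ)..(2 * Real.pi), M * ‖f s θ‖ := by
      calc |∫ θ in (0:ℝ)..(2 * Real.pi), (⟪P1 u (s, θ), f s θ⟫ : ℝ)|
          ≤ ∫ θ in (0:ℝ)..(2 * Real.pi), |(⟪P1 u (s, θ), f s θ⟫ : ℝ)| :=
            intervalIntegral.abs_integral_le_integral_abs h2pi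
        _ ≤ ∫ θ in (0:ℝ)..(2 * Real.pi), M * ‖f s θ‖ := by
            refine intervalIntegral.integral_mono_on h2pi
              ((hAfc.comp (Continuous.prodMk_right s)).abs.intervalIntegrable _ _)
              ((continuous_const.mul ((hf.comp (Continuous.prodMk_right s)).norm)).intervalIntegrable _ _)
              fun θ hθ => le_trans (abs_real_inner_le_norm _ _)
                (mul_le_mul_of_nonneg_right (hAle s hs θ) (norm_nonneg _))
    rw [intervalIntegral.integral_const_mul] at h1
    rw [abs_mul, abs_two]
    calc 2 * |∫ θ in (0:ℝ)..(2 * Real.pi), (⟪P1 u (s, θ), f s θ⟫ : ℝ)|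
        ≤ 2 * (M * ∫ θ in (0:ℝ)..(2 * Real.pi), ‖f s θ‖) := by linarith
      _ = 2 * M * ∫ θ in (0:ℝ)..(2 * Real.pi), ‖f s θ‖ := by ring
  -- final comparison
  have hRHS : (2 * M * ∫ s in (-|t|)..|t|, ∫ θ in (0:ℝ)..(2 * Real.pi), ‖f s θ‖)
      = ∫ s in (-|t|)..|t|, 2 * M * ∫ θ in (0:ℝ)..(2 * Real.pi), ‖f s θ‖ :=
    (intervalIntegral.integral_const_mul _ _).symm
  rw [hRHS]
  set G : ℝ → ℝ := fun s => 2 * ∫ θ in (0:ℝ)..(2 * Real.pi), (⟪P1 u (s, θ), f s θ⟫ : ℝ) with hG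
  set H : ℝ → ℝ := fun s => 2 * M * ∫ θ in (0:ℝ)..(2 * Real.pi), ‖f s θ‖ with hHdef
  have hGc : Continuous G := continuous_const.mul hφc
  have hHc' : Continuous H := continuous_const.mul hHc
  have hHnn' : ∀ s : ℝ, 0 ≤ H s := fun s => by
    simp only [hHdef]
    have := hHnn s
    positivity
  rcases le_total 0 t with htpos | htneg
  · rw [abs_of_nonneg htpos]
    calc |∫ s in (0:ℝ)..t, G s| ≤ ∫ s in (0:ℝ)..t, |G s| :=
          intervalIntegral.abs_integral_le_integral_abs htpos
      _ ≤ ∫ s in (0:ℝ)..t, H s := by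
          refine intervalIntegral.integral_mono_on htpos
            (hGc.abs.intervalIntegrable _ _) (hHc'.intervalIntegrable _ _) fun s hs => ?_
          exact hφle s ⟨by linarith [hs.1, hT], le_trans hs.2 ht.2⟩
      _ ≤ ∫ s in (-t)..t, H s := by
          refine intervalIntegral.integral_mono_interval (by linarith) htpos le_rfl
            (Filter.Eventually.of_forall fun s => hHnn' s) (hHc'.intervalIntegrable _ _)
  · rw [abs_of_nonpos htneg]
    rw [intervalIntegral.integral_symm]
    rw [abs_neg]
    calc |∫ s in t..(0:ℝ), G s| ≤ ∫ s in t..(0:ℝ), |G s| :=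
          intervalIntegral.abs_integral_le_integral_abs htneg
      _ ≤ ∫ s in t..(0:ℝ), H s := by
          refine intervalIntegral.integral_mono_on htneg
            (hGc.abs.intervalIntegrable _ _) (hHc'.intervalIntegrable _ _) fun s hs => ?_
          exact hφle s ⟨le_trans ht.1 hs.1, by linarith [hs.2, hT]⟩
      _ ≤ ∫ s in (-(-t))..(-t), H s := by
          refine intervalIntegral.integral_mono_interval (by linarith) htneg (by linarith)
            (Filter.Eventually.of_forall fun s => hHnn' s) (hHc'.intervalIntegrable _ _)
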